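/- arXiv:math/0510413 — 2 statements merged into one kernel-verified Lean document; each statement's English description precedes it below -/
import Mathlib

section
/- Let M be an immersed surface in ℝⁿ with n ≥ 4, let p ∈ M be a non-umbilic point, and let g denote the first fundamental form of M. Then there exist an affine plane E_p passing through the origin of N_pM and containing the curvature ellipse at p, and a vector c_p ∈ E_p such that c_p·α_p = g_p (i.e. ⟨c_p, α_p(X,Y)⟩ = ⟨X,Y⟩ for all X,Y ∈ T_pM), if and only if p is a semiumbilic point that is not a point of inflection. Moreover, if such a vector c_p exists, it is unique. -/
/- Local framework: an immersed surface in ℝⁿ is given by a smooth parametrization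
`ψ : Pl → Amb n` (`Pl = ℝ²` the parameter domain) whose differential is everywhere
injective.  Tangent/normal spaces, fundamental forms, connections, curvature ellipse,
(semi)umbilic and inflection points, flatness, etc. are defined from `ψ`. -/

noncomputable section
open scoped RealInnerProductSpace

/-- The parameter plane ℝ². -/
abbrev Pl := EuclideanSpace ℝ (Fin 2)
/-- Ambient Euclidean space ℝⁿ. -/
abbrev Amb (n : ℕ) := EuclideanSpace ℝ (Fin n)

/-- `ψ` is a smooth immersion. -/
def Immersion {n : ℕ} (ψ : Pl → Amb n) : Prop :=
  ContDiff ℝ (⊤ : ℕ∞) ψ ∧ ∀ q, Function.Injective (fderiv ℝ ψ q)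

/-- Tangent plane `T_pM` (as a linear subspace of the ambient space) at the point
with parameter `q`. -/
def Tang {n : ℕ} (ψ : Pl → Amb n) (q : Pl) : Submodule ℝ (Amb n) :=
  LinearMap.range (fderiv ℝ ψ q : Pl →ₗ[ℝ] Amb n)

/-- Normal space `N_pM = (T_pM)ᗮ`. -/
def Nor {n : ℕ} (ψ : Pl → Amb n) (q : Pl) : Submodule ℝ (Amb n) :=
  (Tang ψ q)ᗮ

/-- Tangential part `X ↦ X^⊤` of an ambient vector. -/
def tproj {n : ℕ} (ψ : Pl → Amb n) (q : Pl) (x : Amb n) : Amb n :=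
  (Submodule.orthogonalProjectionOnto (Tang ψ q) x : Amb n)

/-- Normal part `X ↦ X^⊥` of an ambient vector. -/
def nproj {n : ℕ} (ψ : Pl → Amb n) (q : Pl) (x : Amb n) : Amb n :=
  x - tproj ψ q x

/-- The second fundamental form `α` at the point of parameter `q`, evaluated on the
tangent vectors `dψ_q v`, `dψ_q w` (for parameter directions `v w : Pl`):
`α(dψ v, dψ w) = (D_{dψ v} (dψ w))^⊥ = (∂_v ∂_w ψ)^⊥`. -/
def sff {n : ℕ} (ψ : Pl → Amb n) (q : Pl) (v w : Pl) : Amb n :=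
  nproj ψ q (fderiv ℝ (fun x => fderiv ℝ ψ x w) q v)

/-- The curvature ellipse at `q`: image of `η(t) = α(t,t)` over the unit tangent
vectors `t = dψ_q v`. -/
def Ellipse {n : ℕ} (ψ : Pl → Amb n) (q : Pl) : Set (Amb n) :=
  {z | ∃ v : Pl, ‖fderiv ℝ ψ q v‖ = 1 ∧ z = sff ψ q v v}

/-- `q` is an umbilic point: the curvature ellipse degenerates to a point. -/
def Umbilic {n : ℕ} (ψ : Pl → Amb n) (q : Pl) : Prop :=
  ∃ a : Amb n, Ellipse ψ q = {a}

/-- `q` is a semiumbilic point: the curvature ellipse lies in an affine line. -/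
def Semiumbilic {n : ℕ} (ψ : Pl → Amb n) (q : Pl) : Prop :=
  ∃ a b : Amb n, Ellipse ψ q ⊆ {x | ∃ s : ℝ, x = a + s • b}

/-- `q` is a point of inflection: the curvature ellipse lies in a line through the
origin of the normal space. -/
def Inflection {n : ℕ} (ψ : Pl → Amb n) (q : Pl) : Prop :=
  ∃ b : Amb n, Ellipse ψ q ⊆ {x | ∃ s : ℝ, x = s • b}

/-- The surface is semiumbilical: every point is semiumbilic and not of inflection. -/
def Semiumbilical {n : ℕ} (ψ : Pl → Amb n) : Prop :=
  ∀ q, Semiumbilic ψ q ∧ ¬ Inflection ψ q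

/-- A smooth ambient-valued field which is everywhere tangent. -/
def TangentField {n : ℕ} (ψ : Pl → Amb n) (F : Pl → Amb n) : Prop :=
  ContDiff ℝ (⊤ : ℕ∞) F ∧ ∀ q, F q ∈ Tang ψ q

/-- A smooth ambient-valued field which is everywhere normal (a section of `NM`). -/
def NormalField {n : ℕ} (ψ : Pl → Amb n) (F : Pl → Amb n) : Prop :=
  ContDiff ℝ (⊤ : ℕ∞) F ∧ ∀ q, F q ∈ Nor ψ q

/-- The tangent covariant derivative `∇^⊤ F = (D F)^⊤` of an ambient field `F`
along the `i`-th coordinate direction of the parameter plane. -/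
def covT {n : ℕ} (ψ : Pl → Amb n) (F : Pl → Amb n) (i : Fin 2) (q : Pl) : Amb n :=
  tproj ψ q (fderiv ℝ F q (EuclideanSpace.single i (1:ℝ)))

/-- The tangent connection `∇^⊤` is flat: its curvature `R(∂₁,∂₂)` annihilates every
smooth tangent field (by tensoriality of the curvature this means `R = 0`, since the
coordinate fields `∂₁, ∂₂` commute and span). -/
def FlatSurface {n : ℕ} (ψ : Pl → Amb n) : Prop :=
  ∀ F : Pl → Amb n, TangentField ψ F →
    ∀ q, covT ψ (covT ψ F 1) 0 q = covT ψ (covT ψ F 0) 1 q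

/-- A tangent field is parallel: `∇^⊤ Y = (D Y)^⊤ = 0` in every tangent direction. -/
def ParallelT {n : ℕ} (ψ : Pl → Amb n) (F : Pl → Amb n) : Prop :=
  ∀ q (v : Pl), tproj ψ q (fderiv ℝ F q v) = 0

/-- A normal section is parallel: `∇^⊥ u = (D u)^⊥ = 0` in every tangent direction. -/
def ParallelN {n : ℕ} (ψ : Pl → Amb n) (F : Pl → Amb n) : Prop :=
  ∀ q (v : Pl), nproj ψ q (fderiv ℝ F q v) = 0

/-- `c · α = g`: the normal section `c` satisfies `⟨c, α(X,Y)⟩ = ⟨X,Y⟩` for all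
tangent vectors `X = dψ v`, `Y = dψ w`. -/
def CAG {n : ℕ} (ψ : Pl → Amb n) (c : Pl → Amb n) : Prop :=
  ∀ q (v w : Pl), (⟪c q, sff ψ q v w⟫) = ⟪fderiv ℝ ψ q v, fderiv ℝ ψ q w⟫

/-- `e` is a tangent field with `∇^⊤_X e = X` for every tangent vector `X = dψ v`. -/
def EulerField {n : ℕ} (ψ : Pl → Amb n) (e : Pl → Amb n) : Prop :=
  TangentField ψ e ∧ ∀ q (v : Pl), tproj ψ q (fderiv ℝ e q v) = fderiv ℝ ψ q v

/-- `j` is the tangent field `½ grad⟨c,c⟩` (gradient with respect to the first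
fundamental form): `⟨2 j, dψ v⟩ = d⟨c,c⟩(dψ v)` for every direction `v`. -/
def HalfGradCSq {n : ℕ} (ψ : Pl → Amb n) (c j : Pl → Amb n) : Prop :=
  TangentField ψ j ∧
    ∀ q (v : Pl), 2 * (⟪j q, fderiv ℝ ψ q v⟫) = fderiv ℝ (fun x => (⟪c x, c x⟫ : ℝ)) q v

/-- `k` is a normal section with `(D_X (e - k))^⊥ = 0` for all tangent `X`. -/
def KField {n : ℕ} (ψ : Pl → Amb n) (e k : Pl → Amb n) : Prop :=
  NormalField ψ k ∧ ∀ q (v : Pl), nproj ψ q (fderiv ℝ (fun x => e x - k x) q v) = 0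

/-- `dψ_q v` is a (unit) asymptotic direction at `q`: `η(t) = α(t,t)` is an endpoint
(extreme point) of the segment into which the curvature ellipse degenerates. -/
def IsAsymptotic {n : ℕ} (ψ : Pl → Amb n) (q : Pl) (v : Pl) : Prop :=
  ‖fderiv ℝ ψ q v‖ = 1 ∧ sff ψ q v v ∈ Set.extremePoints ℝ (Ellipse ψ q)


section Aux

variable {n : ℕ}

lemma nproj_mem (ψ : Pl → Amb n) (q : Pl) (x : Amb n) : nproj ψ q x ∈ Nor ψ q :=
  Submodule.sub_starProjection_mem_orthogonal (K := Tang ψ q) x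

lemma nproj_add (ψ : Pl → Amb n) (q : Pl) (x y : Amb n) :
    nproj ψ q (x + y) = nproj ψ q x + nproj ψ q y := by
  simp only [nproj, tproj, map_add, Submodule.coe_add]
  abel

lemma nproj_smul (ψ : Pl → Amb n) (q : Pl) (a : ℝ) (x : Amb n) :
    nproj ψ q (a • x) = a • nproj ψ q x := by
  simp only [nproj, tproj, map_smul, Submodule.coe_smul, smul_sub]

lemma sff_eq (ψ : Pl → Amb n) (hψ : Immersion ψ) (q : Pl) (v w : Pl) :
    sff ψ q v w = nproj ψ q (fderiv ℝ (fderiv ℝ ψ) q v w) := by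
  have hd : DifferentiableAt ℝ (fderiv ℝ ψ) q :=
    ((hψ.1.fderiv_right (m := 1) (WithTop.coe_le_coe.mpr le_top)).differentiable one_ne_zero).differentiableAt
  have : fderiv ℝ (fun x => fderiv ℝ ψ x w) q
      = (fderiv ℝ (fderiv ℝ ψ) q).flip w := by
    have := fderiv_clm_apply (c := fderiv ℝ ψ) (u := fun _ => w) (x := q) hd
      (differentiableAt_const w)
    simpa using this
  simp only [sff, this]
  rfl

lemma sff_symm (ψ : Pl → Amb n) (hψ : Immersion ψ) (q : Pl) (v w : Pl) :
    sff ψ q v w = sff ψ q w v := by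
  rw [sff_eq ψ hψ, sff_eq ψ hψ]
  have hdiff : ∀ y, HasFDerivAt ψ (fderiv ℝ ψ y) y := fun y =>
    (hψ.1.differentiable (by simp)).differentiableAt.hasFDerivAt
  have hd : DifferentiableAt ℝ (fderiv ℝ ψ) q :=
    ((hψ.1.fderiv_right (m := 1) (WithTop.coe_le_coe.mpr le_top)).differentiable one_ne_zero).differentiableAt
  rw [second_derivative_symmetric hdiff hd.hasFDerivAt v w]

lemma sff_add_left (ψ : Pl → Amb n) (hψ : Immersion ψ) (q : Pl) (v v' w : Pl) :
    sff ψ q (v + v') w = sff ψ q v w + sff ψ q v' w := by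
  simp only [sff_eq ψ hψ, map_add, ContinuousLinearMap.add_apply, nproj_add]

lemma sff_smul_left (ψ : Pl → Amb n) (hψ : Immersion ψ) (q : Pl) (a : ℝ) (v w : Pl) :
    sff ψ q (a • v) w = a • sff ψ q v w := by
  simp only [sff_eq ψ hψ, map_smul, ContinuousLinearMap.smul_apply, nproj_smul]

lemma sff_add_right (ψ : Pl → Amb n) (hψ : Immersion ψ) (q : Pl) (v w w' : Pl) :
    sff ψ q v (w + w') = sff ψ q v w + sff ψ q v w' := by
  simp only [sff_eq ψ hψ, map_add, nproj_add]

lemma sff_smul_right (ψ : Pl → Amb n) (hψ : Immersion ψ) (q : Pl) (a : ℝ) (v w : Pl) :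
    sff ψ q v (a • w) = a • sff ψ q v w := by
  simp only [sff_eq ψ hψ, map_smul, nproj_smul]

lemma sff_mem (ψ : Pl → Amb n) (q : Pl) (v w : Pl) : sff ψ q v w ∈ Nor ψ q :=
  nproj_mem ψ q _

end Aux
section Basis
variable {n : ℕ}

lemma exists_obasis (ψ : Pl → Amb n) (hψ : Immersion ψ) (q : Pl) :
    ∃ v₁ v₂ : Pl,
      (⟪fderiv ℝ ψ q v₁, fderiv ℝ ψ q v₁⟫ : ℝ) = 1 ∧
      (⟪fderiv ℝ ψ q v₂, fderiv ℝ ψ q v₂⟫ : ℝ) = 1 ∧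
      (⟪fderiv ℝ ψ q v₁, fderiv ℝ ψ q v₂⟫ : ℝ) = 0 ∧
      ∀ v : Pl, ∃ x y : ℝ, v = x • v₁ + y • v₂ := by
  set L := fderiv ℝ ψ q with hL
  have hinj : Function.Injective L := hψ.2 q
  have hker : ∀ v : Pl, L v = 0 → v = 0 := by
    intro v hv
    apply hinj
    simp [hv]
  set e₀ : Pl := EuclideanSpace.single 0 (1:ℝ) with he₀
  set e₁ : Pl := EuclideanSpace.single 1 (1:ℝ) with he₁
  have he₀ne : e₀ ≠ 0 := by
    intro h
    have := congrFun (congrArg (fun f : Pl => (f : Fin 2 → ℝ)) h) 0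
    simp [he₀] at this
  have hLe₀ : L e₀ ≠ 0 := fun h => he₀ne (hker _ h)
  have hne₀ : ‖L e₀‖ ≠ 0 := norm_ne_zero_iff.mpr hLe₀
  set v₁ : Pl := ‖L e₀‖⁻¹ • e₀ with hv₁
  have hLv₁ : (⟪L v₁, L v₁⟫ : ℝ) = 1 := by
    rw [hv₁, map_smul, real_inner_smul_left, real_inner_smul_right,
      real_inner_self_eq_norm_sq, sq]
    field_simp
  set w : Pl := e₁ - (⟪L e₁, L v₁⟫ : ℝ) • v₁ with hw
  have hLw : L w = L e₁ - (⟪L e₁, L v₁⟫ : ℝ) • L v₁ := by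
    rw [hw, map_sub, map_smul]
  have hwv₁ : (⟪L w, L v₁⟫ : ℝ) = 0 := by
    rw [hLw, inner_sub_left, real_inner_smul_left, hLv₁]
    ring
  have hwne : w ≠ 0 := by
    intro h
    rw [hw, sub_eq_zero, hv₁, smul_smul] at h
    have := congrFun (congrArg (fun f : Pl => (f : Fin 2 → ℝ)) h) 1
    simp [he₀, he₁, EuclideanSpace.single_apply] at this
  have hLwne : L w ≠ 0 := fun h => hwne (hker _ h)
  have hnw : ‖L w‖ ≠ 0 := norm_ne_zero_iff.mpr hLwne
  set v₂ : Pl := ‖L w‖⁻¹ • w with hv₂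
  have hLv₂ : (⟪L v₂, L v₂⟫ : ℝ) = 1 := by
    rw [hv₂, map_smul, real_inner_smul_left, real_inner_smul_right,
      real_inner_self_eq_norm_sq, sq]
    field_simp
  have hv₁v₂ : (⟪L v₁, L v₂⟫ : ℝ) = 0 := by
    have h2 : L v₂ = ‖L w‖⁻¹ • L w := by rw [hv₂, map_smul]
    rw [h2, real_inner_smul_right, real_inner_comm, hwv₁, mul_zero]
  refine ⟨v₁, v₂, hLv₁, hLv₂, hv₁v₂, ?_⟩
  intro v
  have hv : v = (v 0) • e₀ + (v 1) • e₁ := by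
    ext i
    fin_cases i <;>
      simp [he₀, he₁, EuclideanSpace.single_apply]
  have he₀' : e₀ = ‖L e₀‖ • v₁ := by
    rw [hv₁, smul_smul, mul_inv_cancel₀ hne₀, one_smul]
  have he₁' : e₁ = ‖L w‖ • v₂ + (⟪L e₁, L v₁⟫ : ℝ) • v₁ := by
    rw [hv₂, smul_smul, mul_inv_cancel₀ hnw, one_smul, hw]
    abel
  refine ⟨v 0 * ‖L e₀‖ + v 1 * (⟪L e₁, L v₁⟫ : ℝ), v 1 * ‖L w‖, ?_⟩
  calc v = (v 0) • e₀ + (v 1) • e₁ := hv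
    _ = (v 0) • (‖L e₀‖ • v₁) + (v 1) • (‖L w‖ • v₂ + (⟪L e₁, L v₁⟫ : ℝ) • v₁) := by
        rw [← he₀', ← he₁']
    _ = (v 0 * ‖L e₀‖ + v 1 * (⟪L e₁, L v₁⟫ : ℝ)) • v₁ + (v 1 * ‖L w‖) • v₂ := by
        module

end Basis
section Dual
variable {F : Type*} [NormedAddCommGroup F] [InnerProductSpace ℝ F]

lemma exists_dual_vec (H u : F) (hu : u ≠ 0) (hnotu : ∀ r : ℝ, H ≠ r • u) :
    ∃ c : F, c ∈ Submodule.span ℝ ({H, u} : Set F) ∧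
      (⟪c, H⟫ : ℝ) = 1 ∧ (⟪c, u⟫ : ℝ) = 0 := by
  have huu : (⟪u, u⟫ : ℝ) ≠ 0 := fun h => hu (inner_self_eq_zero.1 h)
  obtain ⟨k, hk⟩ : ∃ k : ℝ, k = (⟪H, u⟫ : ℝ) / (⟪u, u⟫ : ℝ) := ⟨_, rfl⟩
  obtain ⟨h', hh'⟩ : ∃ h' : F, h' = H - k • u := ⟨_, rfl⟩
  have hh'u : (⟪h', u⟫ : ℝ) = 0 := by
    rw [hh', inner_sub_left, real_inner_smul_left, hk, div_mul_cancel₀ _ huu, sub_self]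
  have hh'ne : h' ≠ 0 := by
    intro h
    apply hnotu k
    rw [hh', sub_eq_zero] at h
    exact h
  have hh'h' : (⟪h', h'⟫ : ℝ) ≠ 0 := fun h => hh'ne (inner_self_eq_zero.1 h)
  refine ⟨(⟪h', h'⟫ : ℝ)⁻¹ • h', ?_, ?_, ?_⟩
  · apply Submodule.smul_mem
    rw [hh']
    exact Submodule.sub_mem _ (Submodule.subset_span (by simp))
      (Submodule.smul_mem _ _ (Submodule.subset_span (by simp)))
  · have hHdecomp : H = h' + k • u := by rw [hh']; module
    rw [real_inner_smul_left, hHdecomp, inner_add_right, real_inner_smul_right,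
      hh'u, mul_zero, add_zero, inv_mul_cancel₀ hh'h']
  · rw [real_inner_smul_left, hh'u, mul_zero]

end Dual
set_option maxHeartbeats 2000000 in
/-- Let `M` be an immersed surface in ℝⁿ, `n ≥ 4`, and `p` a non-umbilic
point.  There exist an affine plane `E_p` through the origin of `N_pM` containing the
curvature ellipse at `p` and a vector `c_p ∈ E_p` with `c_p·α_p = g_p` iff `p` is a
semiumbilic point which is not a point of inflection; moreover such a `c_p` is unique. -/
theorem statement_0 {n : ℕ} (hn : 4 ≤ n) (ψ : Pl → Amb n) (hψ : Immersion ψ)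
    (q : Pl) (hq : ¬ Umbilic ψ q) :
    ((∃ E : Submodule ℝ (Amb n), E ≤ Nor ψ q ∧ Module.finrank ℝ E = 2 ∧
        Ellipse ψ q ⊆ (E : Set (Amb n)) ∧
        ∃ c ∈ E, ∀ v w : Pl, ⟪c, sff ψ q v w⟫ = ⟪fderiv ℝ ψ q v, fderiv ℝ ψ q w⟫) ↔
      (Semiumbilic ψ q ∧ ¬ Inflection ψ q)) ∧
    ∀ c c' : Amb n,
      (∃ E : Submodule ℝ (Amb n), E ≤ Nor ψ q ∧ Module.finrank ℝ E = 2 ∧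
        Ellipse ψ q ⊆ (E : Set (Amb n)) ∧ c ∈ E ∧
        ∀ v w : Pl, ⟪c, sff ψ q v w⟫ = ⟪fderiv ℝ ψ q v, fderiv ℝ ψ q w⟫) →
      (∃ E' : Submodule ℝ (Amb n), E' ≤ Nor ψ q ∧ Module.finrank ℝ E' = 2 ∧
        Ellipse ψ q ⊆ (E' : Set (Amb n)) ∧ c' ∈ E' ∧
        ∀ v w : Pl, ⟪c', sff ψ q v w⟫ = ⟪fderiv ℝ ψ q v, fderiv ℝ ψ q w⟫) →
      c = c' := by
  obtain ⟨v₁, v₂, h11, h22, h12, hspan⟩ := exists_obasis ψ hψ q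
  set L := fderiv ℝ ψ q with hL
  set A := sff ψ q v₁ v₁ with hA
  set D := sff ψ q v₂ v₂ with hD
  set bb := sff ψ q v₁ v₂ with hbb
  set H : Amb n := (1/2 : ℝ) • (A + D) with hH
  set BB : Amb n := (1/2 : ℝ) • (A - D) with hBB
  -- Bilinearity of sff in the chosen basis
  have hbil : ∀ x y x' y' : ℝ, sff ψ q (x•v₁ + y•v₂) (x'•v₁ + y'•v₂)
      = (x*x') • A + (x*y' + y*x') • bb + (y*y') • D := by
    intro x y x' y'
    simp only [sff_add_left ψ hψ, sff_smul_left ψ hψ, sff_add_right ψ hψ,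
      sff_smul_right ψ hψ, sff_symm ψ hψ q v₂ v₁, ← hA, ← hD, ← hbb]
    module
  -- The first fundamental form in the basis
  have hg : ∀ x y x' y' : ℝ, (⟪L (x•v₁+y•v₂), L (x'•v₁+y'•v₂)⟫ : ℝ) = x*x' + y*y' := by
    intro x y x' y'
    have h21 : (⟪L v₂, L v₁⟫ : ℝ) = 0 := by rw [real_inner_comm]; exact h12
    simp only [map_add, map_smul, inner_add_left, inner_add_right,
      real_inner_smul_left, real_inner_smul_right,
      h11, h22, h12, h21]
    ring
  have hunit : ∀ x y : ℝ, ‖L (x•v₁+y•v₂)‖ = 1 ↔ x^2 + y^2 = 1 := by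
    intro x y
    have h2 : ‖L (x•v₁+y•v₂)‖^2 = x^2+y^2 := by
      rw [← real_inner_self_eq_norm_sq, hg]; ring
    constructor
    · intro h; rw [h] at h2; simpa using h2.symm
    · intro h
      have hnn : 0 ≤ ‖L (x•v₁+y•v₂)‖ := norm_nonneg _
      have hfac : (‖L (x•v₁+y•v₂)‖ - 1) * (‖L (x•v₁+y•v₂)‖ + 1) = 0 := by nlinarith
      rcases mul_eq_zero.1 hfac with h' | h' <;> linarith
  -- key module identity
  have hid : ∀ p r : ℝ, p^2 + r^2 = 1 →
      (p*p) • A + (p*r + r*p) • bb + (r*r) • D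
        = H + (p^2-r^2) • BB + (2*p*r) • bb := by
    intro p r hpr
    rw [hH, hBB]
    match_scalars
    · linear_combination (1/2 : ℝ) * hpr
    · ring
    · linear_combination (1/2 : ℝ) * hpr
  -- Ellipse characterization
  have hEll : Ellipse ψ q = {z | ∃ x y : ℝ, x^2 + y^2 = 1 ∧ z = H + x • BB + y • bb} := by
    ext z
    constructor
    · rintro ⟨v, hv1, hz⟩
      obtain ⟨p, r, rfl⟩ := hspan v
      have hpr1 : p^2 + r^2 = 1 := (hunit p r).1 hv1
      refine ⟨p^2 - r^2, 2*p*r, by linear_combination (p^2+r^2+1) * hpr1, ?_⟩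
      rw [hz, hbil, hid p r hpr1]
    · rintro ⟨x, y, hxy, hz⟩
      obtain ⟨p, r, hpr1, hpx, hpy⟩ : ∃ p r : ℝ, p^2+r^2 = 1 ∧ p^2 - r^2 = x ∧ 2*p*r = y := by
        by_cases hx : x = -1
        · have hy2 : y^2 = 0 := by nlinarith
          have hy0 : y = 0 := by nlinarith [sq_nonneg y]
          exact ⟨0, 1, by norm_num, by rw [hx]; norm_num, by rw [hy0]; ring⟩
        · have hx1 : -1 ≤ x := by nlinarith [sq_nonneg y, sq_nonneg (x+1)]
          have hx1' : -1 < x := lt_of_le_of_ne hx1 (Ne.symm hx)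
          have hpos : 0 < (1+x)/2 := by linarith
          have hppos : 0 < Real.sqrt ((1+x)/2) := Real.sqrt_pos.2 hpos
          set p := Real.sqrt ((1+x)/2) with hp
          have hp2 : p^2 = (1+x)/2 := Real.sq_sqrt hpos.le
          have hy2 : y^2 = 1 - x^2 := by nlinarith
          refine ⟨p, y/(2*p), ?_, ?_, ?_⟩
          · field_simp
            nlinarith [hp2, hy2, hppos]
          · field_simp
            nlinarith [hp2, hy2, hppos]
          · field_simp
      refine ⟨p•v₁ + r•v₂, (hunit p r).2 hpr1, ?_⟩
      rw [hbil, hid p r hpr1, hpx, hpy, hz]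
  -- non-umbilicity
  have hBBbb : ¬ (BB = 0 ∧ bb = 0) := by
    rintro ⟨hb1, hb2⟩
    apply hq
    refine ⟨H, ?_⟩
    rw [hEll]
    ext z
    simp only [Set.mem_setOf_eq, Set.mem_singleton_iff]
    constructor
    · rintro ⟨x, y, -, hz⟩; rw [hz, hb1, hb2]; simp
    · intro hz; exact ⟨1, 0, by norm_num, by rw [hz, hb1, hb2]; simp⟩
  -- Semiumbilic characterization
  have hsemi : Semiumbilic ψ q ↔ ∃ u : Amb n, (∃ s:ℝ, BB = s•u) ∧ (∃ t:ℝ, bb = t•u) := by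
    constructor
    · rintro ⟨a, b', hsub⟩
      have hmem : ∀ x y : ℝ, x^2+y^2 = 1 → ∃ s : ℝ, H + x•BB + y•bb = a + s•b' := by
        intro x y hxy
        exact hsub (by rw [hEll]; exact ⟨x, y, hxy, rfl⟩)
      obtain ⟨s₁, hs₁⟩ := hmem 1 0 (by norm_num)
      obtain ⟨s₂, hs₂⟩ := hmem (-1) 0 (by norm_num)
      obtain ⟨s₃, hs₃⟩ := hmem 0 1 (by norm_num)
      obtain ⟨s₄, hs₄⟩ := hmem 0 (-1) (by norm_num)
      refine ⟨b', ⟨(s₁-s₂)/2, ?_⟩, ⟨(s₃-s₄)/2, ?_⟩⟩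
      · linear_combination (norm := module) (1/2:ℝ) • hs₁ - (1/2:ℝ) • hs₂
      · linear_combination (norm := module) (1/2:ℝ) • hs₃ - (1/2:ℝ) • hs₄
    · rintro ⟨u, ⟨s, hs⟩, ⟨t, ht⟩⟩
      refine ⟨H, u, ?_⟩
      intro z hz
      rw [hEll] at hz
      obtain ⟨x, y, hxy, hz⟩ := hz
      exact ⟨x*s + y*t, by rw [hz, hs, ht]; module⟩
  -- Inflection characterization
  have hinfl : Inflection ψ q ↔
      ∃ u : Amb n, (∃ s:ℝ, BB = s•u) ∧ (∃ t:ℝ, bb = t•u) ∧ (∃ r:ℝ, H = r•u) := by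
    constructor
    · rintro ⟨b', hsub⟩
      have hmem : ∀ x y : ℝ, x^2+y^2 = 1 → ∃ s : ℝ, H + x•BB + y•bb = s•b' := by
        intro x y hxy
        exact hsub (by rw [hEll]; exact ⟨x, y, hxy, rfl⟩)
      obtain ⟨s₁, hs₁⟩ := hmem 1 0 (by norm_num)
      obtain ⟨s₂, hs₂⟩ := hmem (-1) 0 (by norm_num)
      obtain ⟨s₃, hs₃⟩ := hmem 0 1 (by norm_num)
      obtain ⟨s₄, hs₄⟩ := hmem 0 (-1) (by norm_num)
      refine ⟨b', ⟨(s₁-s₂)/2, ?_⟩, ⟨(s₃-s₄)/2, ?_⟩, ⟨(s₁+s₂)/2, ?_⟩⟩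
      · linear_combination (norm := module) (1/2:ℝ) • hs₁ - (1/2:ℝ) • hs₂
      · linear_combination (norm := module) (1/2:ℝ) • hs₃ - (1/2:ℝ) • hs₄
      · linear_combination (norm := module) (1/2:ℝ) • hs₁ + (1/2:ℝ) • hs₂
    · rintro ⟨u, ⟨s, hs⟩, ⟨t, ht⟩, ⟨r, hr⟩⟩
      refine ⟨u, ?_⟩
      intro z hz
      rw [hEll] at hz
      obtain ⟨x, y, hxy, hz⟩ := hz
      exact ⟨r + x*s + y*t, by rw [hz, hs, ht, hr]; module⟩
  -- normal space membership
  have hAnor : A ∈ Nor ψ q := sff_mem ψ q v₁ v₁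
  have hDnor : D ∈ Nor ψ q := sff_mem ψ q v₂ v₂
  have hbbnor : bb ∈ Nor ψ q := sff_mem ψ q v₁ v₂
  have hHnor : H ∈ Nor ψ q := Submodule.smul_mem _ _ (Submodule.add_mem _ hAnor hDnor)
  have hBBnor : BB ∈ Nor ψ q := Submodule.smul_mem _ _ (Submodule.sub_mem _ hAnor hDnor)
  have hAHB : A = H + BB := by rw [hH, hBB]; module
  have hDHB : D = H - BB := by rw [hH, hBB]; module
  -- CAG characterization
  have hCAGiff : ∀ c : Amb n,
      (∀ v w : Pl, (⟪c, sff ψ q v w⟫:ℝ) = ⟪L v, L w⟫) ↔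
        ((⟪c,H⟫:ℝ) = 1 ∧ (⟪c,BB⟫:ℝ) = 0 ∧ (⟪c,bb⟫:ℝ) = 0) := by
    intro c
    constructor
    · intro hc
      have hcA : (⟪c,A⟫:ℝ) = 1 := by rw [hA]; rw [hc v₁ v₁]; exact h11
      have hcD : (⟪c,D⟫:ℝ) = 1 := by rw [hD]; rw [hc v₂ v₂]; exact h22
      have hcb : (⟪c,bb⟫:ℝ) = 0 := by rw [hbb]; rw [hc v₁ v₂]; exact h12
      refine ⟨?_, ?_, hcb⟩
      · rw [hH, real_inner_smul_right, inner_add_right, hcA, hcD]; norm_num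
      · rw [hBB, real_inner_smul_right, inner_sub_right, hcA, hcD]; norm_num
    · rintro ⟨h1, h2, h3⟩
      have hcA : (⟪c,A⟫:ℝ) = 1 := by rw [hAHB, inner_add_right, h1, h2]; norm_num
      have hcD : (⟪c,D⟫:ℝ) = 1 := by rw [hDHB, inner_sub_right, h1, h2]; norm_num
      intro v w
      obtain ⟨x, y, rfl⟩ := hspan v
      obtain ⟨x', y', rfl⟩ := hspan w
      rw [hbil, hg]
      simp only [inner_add_right, real_inner_smul_right, hcA, hcD, h3]
      ring
  -- the key analysis of any (c, E) pair
  have hkey : ∀ (c : Amb n) (E : Submodule ℝ (Amb n)),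
      Module.finrank ℝ E = 2 → Ellipse ψ q ⊆ (E : Set (Amb n)) → c ∈ E →
      (∀ v w : Pl, (⟪c, sff ψ q v w⟫:ℝ) = ⟪L v, L w⟫) →
      (∃ u : Amb n, (∃ s:ℝ, BB = s•u) ∧ (∃ t:ℝ, bb = t•u)) ∧
      ¬ Inflection ψ q ∧
      E = Submodule.span ℝ ({H, BB, bb} : Set (Amb n)) ∧
      (⟪c,H⟫:ℝ) = 1 ∧ (⟪c,BB⟫:ℝ) = 0 ∧ (⟪c,bb⟫:ℝ) = 0 := by
    intro c E hE2 hEsub hcE hcag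
    obtain ⟨h1, h2, h3⟩ := (hCAGiff c).1 hcag
    have hptE : ∀ x y : ℝ, x^2+y^2 = 1 → H + x•BB + y•bb ∈ E := by
      intro x y hxy
      exact hEsub (by rw [hEll]; exact ⟨x, y, hxy, rfl⟩)
    have e1 := hptE 1 0 (by norm_num)
    have e2 := hptE (-1) 0 (by norm_num)
    have e3 := hptE 0 1 (by norm_num)
    have e4 := hptE 0 (-1) (by norm_num)
    have hHE : H ∈ E := by
      have h := E.smul_mem (1/2:ℝ) (E.add_mem e1 e2)
      have heq : (1/2:ℝ)•((H+(1:ℝ)•BB+(0:ℝ)•bb) + (H+(-1:ℝ)•BB+(0:ℝ)•bb)) = H := by module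
      rwa [heq] at h
    have hBBE : BB ∈ E := by
      have h := E.smul_mem (1/2:ℝ) (E.sub_mem e1 e2)
      have heq : (1/2:ℝ)•((H+(1:ℝ)•BB+(0:ℝ)•bb) - (H+(-1:ℝ)•BB+(0:ℝ)•bb)) = BB := by module
      rwa [heq] at h
    have hbbE : bb ∈ E := by
      have h := E.smul_mem (1/2:ℝ) (E.sub_mem e3 e4)
      have heq : (1/2:ℝ)•((H+(0:ℝ)•BB+(1:ℝ)•bb) - (H+(0:ℝ)•BB+(-1:ℝ)•bb)) = bb := by module
      rwa [heq] at h
    have hc0 : c ≠ 0 := by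
      intro h
      rw [h, inner_zero_left] at h1
      norm_num at h1
    -- the semiumbilic direction via dimension count
    have horthmem : ∀ z : Amb n, (⟪c,z⟫:ℝ) = 0 → z ∈ (Submodule.span ℝ {c})ᗮ := by
      intro z hz
      intro u hu
      obtain ⟨t, rfl⟩ := Submodule.mem_span_singleton.1 hu
      rw [real_inner_smul_left, hz, mul_zero]
    have hBBW : BB ∈ E ⊓ (Submodule.span ℝ {c})ᗮ := Submodule.mem_inf.2 ⟨hBBE, horthmem _ h2⟩
    have hbbW : bb ∈ E ⊓ (Submodule.span ℝ {c})ᗮ := Submodule.mem_inf.2 ⟨hbbE, horthmem _ h3⟩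
    have hdisj : Disjoint (E ⊓ (Submodule.span ℝ {c})ᗮ) (Submodule.span ℝ {c}) :=
      Disjoint.mono_left inf_le_right (Submodule.orthogonal_disjoint _).symm
    have hrc : Module.finrank ℝ (Submodule.span ℝ {c}) = 1 := finrank_span_singleton hc0
    have hW1 : Module.finrank ℝ ↥(E ⊓ (Submodule.span ℝ {c})ᗮ) ≤ 1 := by
      have hsum := Submodule.finrank_sup_add_finrank_inf_eq
        (E ⊓ (Submodule.span ℝ {c})ᗮ) (Submodule.span ℝ {c})
      rw [hdisj.eq_bot, finrank_bot, add_zero, hrc] at hsum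
      have hle : (E ⊓ (Submodule.span ℝ {c})ᗮ) ⊔ Submodule.span ℝ {c} ≤ E :=
        sup_le inf_le_left ((Submodule.span_singleton_le_iff_mem c E).2 hcE)
      have hfin := Submodule.finrank_mono hle
      rw [hE2] at hfin
      omega
    obtain ⟨u, hWu⟩ :=
      ((E ⊓ (Submodule.span ℝ {c})ᗮ).finrank_le_one_iff_isPrincipal.1 hW1).principal
    rw [hWu] at hBBW hbbW
    obtain ⟨s, hs⟩ := Submodule.mem_span_singleton.1 hBBW
    obtain ⟨t, ht⟩ := Submodule.mem_span_singleton.1 hbbW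
    have hsemi' : ∃ u : Amb n, (∃ s:ℝ, BB = s•u) ∧ (∃ t:ℝ, bb = t•u) :=
      ⟨u, ⟨s, hs.symm⟩, ⟨t, ht.symm⟩⟩
    -- not inflection
    have hni : ¬ Inflection ψ q := by
      intro hinf
      obtain ⟨u', ⟨s', hs'⟩, ⟨t', ht'⟩, ⟨r', hr'⟩⟩ := hinfl.1 hinf
      have hcu' : (⟪c,u'⟫:ℝ) = 0 := by
        by_cases hBB0 : BB = 0
        · have hbb0 : bb ≠ 0 := fun h => hBBbb ⟨hBB0, h⟩
          have ht0 : t' ≠ 0 := by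
            rintro rfl; rw [zero_smul] at ht'; exact hbb0 ht'
          have h3' := h3
          rw [ht', real_inner_smul_right] at h3'
          exact (mul_eq_zero.1 h3').resolve_left ht0
        · have hs0 : s' ≠ 0 := by
            rintro rfl; rw [zero_smul] at hs'; exact hBB0 hs'
          have h2' := h2
          rw [hs', real_inner_smul_right] at h2'
          exact (mul_eq_zero.1 h2').resolve_left hs0
      rw [hr', real_inner_smul_right, hcu', mul_zero] at h1
      norm_num at h1
    -- E is the span of H, BB, bb
    have hspanle : Submodule.span ℝ ({H, BB, bb} : Set (Amb n)) ≤ E := by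
      rw [Submodule.span_le]
      intro z hz
      simp only [Set.mem_insert_iff, Set.mem_singleton_iff] at hz
      rcases hz with rfl | rfl | rfl
      exacts [hHE, hBBE, hbbE]
    obtain ⟨u₀, hu₀S, hcu₀, hu₀ne⟩ : ∃ u₀ : Amb n,
        u₀ ∈ Submodule.span ℝ ({H, BB, bb} : Set (Amb n)) ∧ (⟪c,u₀⟫:ℝ) = 0 ∧ u₀ ≠ 0 := by
      by_cases hBB0 : BB = 0
      · exact ⟨bb, Submodule.subset_span (by simp), h3, fun h => hBBbb ⟨hBB0, h⟩⟩
      · exact ⟨BB, Submodule.subset_span (by simp), h2, hBB0⟩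
    have hHu₀ : LinearIndependent ℝ ![H, u₀] := by
      rw [LinearIndependent.pair_iff]
      intro a b hab
      have hinner := congrArg (fun z : Amb n => (⟪c,z⟫:ℝ)) hab
      simp only [inner_add_right, real_inner_smul_right, h1, hcu₀,
        inner_zero_right, mul_one, mul_zero, add_zero] at hinner
      refine ⟨hinner, ?_⟩
      rw [hinner, zero_smul, zero_add] at hab
      exact (smul_eq_zero.1 hab).resolve_right hu₀ne
    have hrange : Set.range ![H, u₀] = {H, u₀} := by
      ext z
      constructor
      · rintro ⟨i, rfl⟩
        fin_cases i <;> simp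
      · rintro (rfl | rfl)
        exacts [⟨0, rfl⟩, ⟨1, rfl⟩]
    have hrank2 : 2 ≤ Module.finrank ℝ (Submodule.span ℝ ({H, BB, bb} : Set (Amb n))) := by
      have hfr : Module.finrank ℝ (Submodule.span ℝ (Set.range ![H, u₀])) = 2 := by
        rw [finrank_span_eq_card hHu₀]
        simp
      have hle : Submodule.span ℝ (Set.range ![H, u₀])
          ≤ Submodule.span ℝ ({H, BB, bb} : Set (Amb n)) := by
        rw [Submodule.span_le, hrange]
        rintro z (rfl | rfl)
        · exact Submodule.subset_span (by simp)
        · exact hu₀S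
      calc 2 = Module.finrank ℝ (Submodule.span ℝ (Set.range ![H, u₀])) := hfr.symm
        _ ≤ _ := Submodule.finrank_mono hle
    have hEeq : E = Submodule.span ℝ ({H, BB, bb} : Set (Amb n)) := by
      refine (Submodule.eq_of_le_of_finrank_le hspanle ?_).symm
      rw [hE2]
      exact hrank2
    exact ⟨hsemi', hni, hEeq, h1, h2, h3⟩
  constructor
  · constructor
    · rintro ⟨E, hEnor, hE2, hEsub, c, hcE, hcag⟩
      obtain ⟨hu, hni, -, -⟩ := hkey c E hE2 hEsub hcE hcag
      exact ⟨hsemi.2 hu, hni⟩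
    · rintro ⟨hsu, hni⟩
      obtain ⟨u, ⟨s, hs⟩, ⟨t, ht⟩⟩ := hsemi.1 hsu
      have hune : u ≠ 0 := by
        rintro rfl
        exact hBBbb ⟨by rw [hs, smul_zero], by rw [ht, smul_zero]⟩
      have hst : ¬ (s = 0 ∧ t = 0) := by
        rintro ⟨rfl, rfl⟩
        exact hBBbb ⟨by rw [hs, zero_smul], by rw [ht, zero_smul]⟩
      have hHnotu : ∀ r : ℝ, H ≠ r•u := by
        intro r hr
        exact hni (hinfl.2 ⟨u, ⟨s, hs⟩, ⟨t, ht⟩, ⟨r, hr⟩⟩)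
      have huNor : u ∈ Nor ψ q := by
        by_cases hs0 : s = 0
        · have ht0 : t ≠ 0 := fun h => hst ⟨hs0, h⟩
          have hu' : u = t⁻¹ • bb := by rw [ht, smul_smul, inv_mul_cancel₀ ht0, one_smul]
          rw [hu']
          exact Submodule.smul_mem _ _ hbbnor
        · have hu' : u = s⁻¹ • BB := by rw [hs, smul_smul, inv_mul_cancel₀ hs0, one_smul]
          rw [hu']
          exact Submodule.smul_mem _ _ hBBnor
      have hHind : ∀ a b : ℝ, a•H + b•u = 0 → a = 0 ∧ b = 0 := by
        intro a b hab
        by_cases ha : a = 0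
        · refine ⟨ha, ?_⟩
          rw [ha, zero_smul, zero_add] at hab
          exact (smul_eq_zero.1 hab).resolve_right hune
        · exfalso
          apply hHnotu (a⁻¹ * (-b))
          have h' : a • H = (-b) • u := by
            linear_combination (norm := module) hab
          rw [← smul_smul, ← h', smul_smul, inv_mul_cancel₀ ha, one_smul]
      have hHuind : LinearIndependent ℝ ![H, u] := LinearIndependent.pair_iff.2 hHind
      have hrangeHu : Set.range ![H, u] = {H, u} := by
        ext z
        constructor
        · rintro ⟨i, rfl⟩
          fin_cases i <;> simp
        · rintro (rfl | rfl)
          exacts [⟨0, rfl⟩, ⟨1, rfl⟩]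
      refine ⟨Submodule.span ℝ ({H, u} : Set (Amb n)), ?_, ?_, ?_, ?_⟩
      · rw [Submodule.span_le]
        rintro z (rfl | rfl)
        exacts [hHnor, huNor]
      · rw [← hrangeHu, finrank_span_eq_card hHuind]
        simp
      · intro z hz
        rw [hEll] at hz
        obtain ⟨x, y, hxy, hz⟩ := hz
        have hz' : z = H + (x*s + y*t) • u := by rw [hz, hs, ht]; module
        rw [hz']
        exact Submodule.add_mem _ (Submodule.subset_span (by simp))
          (Submodule.smul_mem _ _ (Submodule.subset_span (by simp)))
      · -- construct c
        obtain ⟨c, hcmem, hcH, hcu⟩ := exists_dual_vec H u hune hHnotu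
        have hcBB : (⟪c,BB⟫:ℝ) = 0 := by rw [hs, real_inner_smul_right, hcu, mul_zero]
        have hcbb : (⟪c,bb⟫:ℝ) = 0 := by rw [ht, real_inner_smul_right, hcu, mul_zero]
        exact ⟨c, hcmem, (hCAGiff c).2 ⟨hcH, hcBB, hcbb⟩⟩
  · -- uniqueness
    rintro c c' ⟨E, hEnor, hE2, hEsub, hcE, hcag⟩ ⟨E', hE'nor, hE'2, hE'sub, hc'E, hc'ag⟩
    obtain ⟨-, -, hEeq, h1, h2, h3⟩ := hkey c E hE2 hEsub hcE hcag
    obtain ⟨-, -, hE'eq, h1', h2', h3'⟩ := hkey c' E' hE'2 hE'sub hc'E hc'ag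
    have hcS : c ∈ Submodule.span ℝ ({H, BB, bb} : Set (Amb n)) := hEeq ▸ hcE
    have hc'S : c' ∈ Submodule.span ℝ ({H, BB, bb} : Set (Amb n)) := hE'eq ▸ hc'E
    have hdS : c - c' ∈ Submodule.span ℝ ({H, BB, bb} : Set (Amb n)) :=
      Submodule.sub_mem _ hcS hc'S
    have hdz : ∀ z ∈ Submodule.span ℝ ({H, BB, bb} : Set (Amb n)), (⟪c - c', z⟫:ℝ) = 0 := by
      intro z hz
      induction hz using Submodule.span_induction with
      | mem x hx =>
        simp only [Set.mem_insert_iff, Set.mem_singleton_iff] at hx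
        rcases hx with rfl | rfl | rfl <;>
          rw [inner_sub_left] <;>
          [rw [h1, h1']; rw [h2, h2']; rw [h3, h3']] <;> ring
      | zero => exact inner_zero_right _
      | add x y hx hy ihx ihy => rw [inner_add_right, ihx, ihy, add_zero]
      | smul a x hx ihx => rw [real_inner_smul_right, ihx, mul_zero]
    have hdd : (⟪c - c', c - c'⟫:ℝ) = 0 := hdz _ hdS
    have : c - c' = 0 := inner_self_eq_zero.1 hdd
    exact sub_eq_zero.1 this
end
end

section
/- Let U and V be two surfaces immersed in ℝⁿ and let f : U → V be a diffeomorphism such that for every p ∈ U one has T_pU = T_qV, where q = f(p). Then: a section Y of TU is parallel if and only if Ỹ = Y∘f⁻¹, which is a section of TV, is parallel; and a section u of NU is parallel if and only if u∘f⁻¹, which is a section of NV, is parallel. -/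
/- Local framework: an immersed surface in ℝⁿ is given by a smooth parametrization
`ψ : Pl → Amb n` (`Pl = ℝ²` the parameter domain) whose differential is everywhere
injective.  Tangent/normal spaces, fundamental forms, connections, curvature ellipse,
(semi)umbilic and inflection points, flatness, etc. are defined from `ψ`. -/

noncomputable section
open scoped RealInnerProductSpace

/-- Let `U, V` be surfaces in ℝⁿ and `f : U → V` a diffeomorphism with
`T_pU = T_{f(p)}V` for all `p` (here `V` is parametrized by `χ`, the composition of `f`
with the parametrization `ψ` of `U`, so that `f` is the identity in parameters).
A section `Y` of `TU` is parallel iff `Y∘f⁻¹`, a section of `TV`, is parallel; and a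
section `u` of `NU` is parallel iff `u∘f⁻¹`, a section of `NV`, is parallel. -/
theorem statement_5 {n : ℕ} (ψ χ : Pl → Amb n) (hψ : Immersion ψ) (hχ : Immersion χ)
    (hTT : ∀ q, Tang ψ q = Tang χ q) :
    (∀ Y : Pl → Amb n, TangentField ψ Y → (ParallelT ψ Y ↔ ParallelT χ Y)) ∧
    (∀ u : Pl → Amb n, NormalField ψ u → (ParallelN ψ u ↔ ParallelN χ u)) := by
  have hproj : ∀ q x, tproj ψ q x = tproj χ q x := by
    intro q x; exact congrArg (fun K : Submodule ℝ (Amb n) => ((Submodule.orthogonalProjectionOnto K x : Amb n))) (hTT q)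
  constructor
  · intro Y _; unfold ParallelT; simp_rw [hproj]
  · intro u _; unfold ParallelN nproj; simp_rw [hproj]
end
end
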